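/- arXiv:2105.09152 — 3 statements merged into one kernel-verified Lean document; each statement's English description precedes it below -/
import Mathlib

section
/- Let A = [[A_uu, A_ūuᵀ],[A_ūu, A_ūū]] be symmetric positive definite and B_pu ∈ ℝ^{k×n} of full row rank. Define 𝒫 = I − A_uu⁻¹B_puᵀ(B_pu A_uu⁻¹ B_puᵀ)⁻¹B_pu and Āᵈ = A_ūū − A_ūu 𝒫 A_uu⁻¹ A_ūuᵀ. Then Āᵈ is symmetric positive definite. -/
open Matrix

lemma aux_posDef_of_isUnit {k : Type*} [Fintype k] [DecidableEq k]
    {W : Matrix k k ℝ} (h : W.PosSemidef) (hu : IsUnit W) : W.PosDef := by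
  refine Matrix.posDef_iff_dotProduct_mulVec.mpr ⟨h.1, fun x hx => ?_⟩
  rcases lt_or_eq_of_le (h.dotProduct_mulVec_nonneg x) with hlt | heq
  · exact hlt
  · exfalso
    have h0 : W *ᵥ x = 0 := (h.dotProduct_mulVec_zero_iff x).mp heq.symm
    have hinj : Function.Injective W.mulVec :=
      Matrix.mulVec_injective_iff_isUnit.mpr hu
    exact hx (hinj (h0.trans (Matrix.mulVec_zero W).symm))

lemma aux_isUnit_of_rank {k : ℕ} {W : Matrix (Fin k) (Fin k) ℝ}
    (h : W.rank = k) : IsUnit W := by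
  rw [← Matrix.mulVec_injective_iff_isUnit]
  have htop : LinearMap.range W.mulVecLin = ⊤ := by
    apply Submodule.eq_top_of_finrank_eq
    rw [← Matrix.rank, h]
    simp [Module.finrank_fintype_fun_eq_card]
  have hsurj : Function.Surjective W.mulVecLin := LinearMap.range_eq_top.mp htop
  have hinj : Function.Injective W.mulVecLin :=
    (LinearMap.injective_iff_surjective).mpr hsurj
  intro x y hxy
  exact hinj (by simpa [Matrix.mulVecLin_apply] using hxy)

open scoped MatrixOrder in
theorem stmt_9 {n m k : ℕ}
    (Auu : Matrix (Fin n) (Fin n) ℝ) (Abu : Matrix (Fin m) (Fin n) ℝ)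
    (Abb : Matrix (Fin m) (Fin m) ℝ) (Bpu : Matrix (Fin k) (Fin n) ℝ)
    (hA : (Matrix.fromBlocks Auu Abuᵀ Abu Abb).PosDef)
    (hB : Bpu.rank = k)
    (P : Matrix (Fin n) (Fin n) ℝ)
    (hP : P = 1 - Auu⁻¹ * Bpuᵀ * (Bpu * Auu⁻¹ * Bpuᵀ)⁻¹ * Bpu) :
    (Abb - Abu * P * Auu⁻¹ * Abuᵀ).PosDef := by
  -- the block matrix in "Hermitian" form
  have hM : Matrix.fromBlocks Auu Abuᵀ Abu Abb
      = Matrix.fromBlocks Auu Abuᵀ (Abuᵀ)ᴴ Abb := by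
    rw [Matrix.conjTranspose_eq_transpose_of_trivial, Matrix.transpose_transpose]
  -- Auu is positive definite
  have hAuu : Auu.PosDef := by
    rw [Matrix.posDef_iff_dotProduct_mulVec]
    constructor
    · have h1 := congrArg Matrix.toBlocks₁₁ hA.1
      simpa [Matrix.fromBlocks_conjTranspose, Matrix.fromBlocks_transpose, Matrix.toBlocks_fromBlocks₁₁, Matrix.IsSymm] using h1
    · intro x hx
      have hx' : (x ⊕ᵥ (0 : Fin m → ℝ)) ≠ 0 := by
        intro h
        exact hx (funext fun i => congrFun h (Sum.inl i))
      have h2 := hA.dotProduct_mulVec_pos hx'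
      simpa [Matrix.fromBlocks_mulVec, Function.star_sumElim,
        sumElim_dotProduct_sumElim] using h2
  haveI : Invertible Auu := hAuu.isUnit.invertible
  -- Schur complement is positive definite
  have hS : (Abb - Abu * Auu⁻¹ * Abuᵀ).PosDef := by
    rw [Matrix.posDef_iff_dotProduct_mulVec]
    constructor
    · have h1 : (Matrix.fromBlocks Auu Abuᵀ (Abuᵀ)ᴴ Abb).IsHermitian := hM ▸ hA.1
      have h2 := (Matrix.IsHermitian.fromBlocks₁₁ Abuᵀ Abb hAuu.1).mp h1
      simpa [Matrix.conjTranspose_eq_transpose_of_trivial,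
        Matrix.transpose_transpose] using h2
    · intro z hz
      have hz' : ((-((Auu⁻¹ * Abuᵀ) *ᵥ z)) ⊕ᵥ z) ≠ 0 := by
        intro h
        exact hz (funext fun i => congrFun h (Sum.inr i))
      have h2 := hA.dotProduct_mulVec_pos hz'
      rw [Matrix.dotProduct_mulVec, hM,
        Matrix.schur_complement_eq₁₁ Abuᵀ Abb _ _ hAuu.1, neg_add_cancel] at h2
      simp only [star_zero, Matrix.zero_vecMul, zero_dotProduct, zero_add] at h2
      rw [Matrix.dotProduct_mulVec]
      simpa [Matrix.conjTranspose_eq_transpose_of_trivial,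
        Matrix.transpose_transpose] using h2
  -- the constraint Gram matrix W is positive definite
  set W : Matrix (Fin k) (Fin k) ℝ := Bpu * Auu⁻¹ * Bpuᵀ with hW
  have hQ : (Auu⁻¹).PosDef := hAuu.inv
  have hWsemi : W.PosSemidef := by
    have := hQ.posSemidef.mul_mul_conjTranspose_same Bpu
    simpa [Matrix.conjTranspose_eq_transpose_of_trivial] using this
  have hWunit : IsUnit W := by
    apply aux_isUnit_of_rank
    set C := CFC.sqrt (Auu⁻¹) with hC
    have hC2 : C * C = Auu⁻¹ := CFC.sqrt_mul_sqrt_self _ hQ.posSemidef.nonneg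
    have hCH : Cᴴ = C := (Matrix.nonneg_iff_posSemidef.mp (CFC.sqrt_nonneg (Auu⁻¹))).1
    have hCdet : IsUnit C.det := by
      have : IsUnit (C.det * C.det) := by
        rw [← Matrix.det_mul, hC2]
        exact (Matrix.isUnit_iff_isUnit_det _).mp hQ.isUnit
      exact isUnit_of_mul_isUnit_left this
    have hWeq : W = (Bpu * C) * (Bpu * C)ᴴ := by
      rw [Matrix.conjTranspose_mul, hCH, hW,
        Matrix.conjTranspose_eq_transpose_of_trivial]
      rw [← hC2]
      simp [Matrix.mul_assoc]
    rw [hWeq, Matrix.rank_self_mul_conjTranspose,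
      Matrix.rank_mul_eq_left_of_isUnit_det C Bpu hCdet, hB]
  have hWpos : W.PosDef := aux_posDef_of_isUnit hWsemi hWunit
  -- the correction term is positive semidefinite
  have hE : ((Abu * Auu⁻¹ * Bpuᵀ) * W⁻¹ * (Abu * Auu⁻¹ * Bpuᵀ)ᴴ).PosSemidef :=
    hWpos.inv.posSemidef.mul_mul_conjTranspose_same _
  -- assemble
  have hQt : (Auu⁻¹)ᵀ = Auu⁻¹ := by
    have := hQ.1
    rwa [Matrix.IsHermitian, Matrix.conjTranspose_eq_transpose_of_trivial] at this
  have hfinal : Abb - Abu * P * Auu⁻¹ * Abuᵀ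
      = (Abb - Abu * Auu⁻¹ * Abuᵀ)
        + (Abu * Auu⁻¹ * Bpuᵀ) * W⁻¹ * (Abu * Auu⁻¹ * Bpuᵀ)ᴴ := by
    subst hP
    rw [Matrix.conjTranspose_eq_transpose_of_trivial]
    simp only [Matrix.transpose_mul, hQt, Matrix.transpose_transpose]
    simp only [Matrix.mul_sub, Matrix.sub_mul, Matrix.mul_one, Matrix.one_mul,
      Matrix.mul_assoc, sub_eq_add_neg, Matrix.mul_neg, Matrix.neg_mul,
      Matrix.add_mul, Matrix.mul_add, smul_mul_assoc, mul_smul_comm]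
    abel
  rw [hfinal]
  exact hS.add_posSemidef hE
end

section
/- The matrix A_P = [[A_uu, 𝒫ᵀA_ūuᵀ],[A_ūu𝒫, A_ūū]] is symmetric positive definite, given that A is SPD and B_pu is full row rank. -/
open Matrix

private lemma real_conjTranspose_eq_transpose {a b : Type*} (M : Matrix a b ℝ) : Mᴴ = Mᵀ := by
  ext i j; simp [conjTranspose_apply]

private lemma posDef_fromBlocks₁₁_real {m n : Type*} [Fintype m] [DecidableEq m] [Fintype n]
    {A : Matrix m m ℝ} (B : Matrix m n ℝ) (D : Matrix n n ℝ) (hA : A.PosDef) [Invertible A] :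
    (fromBlocks A B Bᴴ D).PosDef ↔ (D - Bᴴ * A⁻¹ * B).PosDef := by
  rw [posDef_iff_dotProduct_mulVec, posDef_iff_dotProduct_mulVec, IsHermitian.fromBlocks₁₁ _ _ hA.1]
  refine and_congr_right fun _ => ⟨fun h y hy => ?_, fun h x hx => ?_⟩
  · have key := @h (-((A⁻¹ * B) *ᵥ y) ⊕ᵥ y)
      (fun hc => hy (funext fun i => congrFun hc (Sum.inr i)))
    rw [dotProduct_mulVec, schur_complement_eq₁₁ B D _ _ hA.1, neg_add_cancel, dotProduct_zero,
      zero_add] at key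
    rw [dotProduct_mulVec]; exact key
  · rw [dotProduct_mulVec, ← Sum.elim_comp_inl_inr x, schur_complement_eq₁₁ B D _ _ hA.1]
    by_cases hy : x ∘ Sum.inr = 0
    · have hxl : x ∘ Sum.inl ≠ 0 := fun hc => hx (funext fun i =>
        match i with | .inl j => congrFun hc j | .inr j => congrFun hy j)
      rw [hy, mulVec_zero, add_zero]
      simp only [star_zero, zero_vecMul, zero_dotProduct, add_zero]
      rw [← dotProduct_mulVec]
      exact hA.dotProduct_mulVec_pos hxl
    · apply add_pos_of_nonneg_of_pos
      · rw [← dotProduct_mulVec]; exact hA.posSemidef.dotProduct_mulVec_nonneg _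
      · rw [← dotProduct_mulVec]; exact h hy

theorem stmt_16 {n m k : ℕ}
    (Auu : Matrix (Fin n) (Fin n) ℝ) (Abu : Matrix (Fin m) (Fin n) ℝ)
    (Abb : Matrix (Fin m) (Fin m) ℝ) (Bpu : Matrix (Fin k) (Fin n) ℝ)
    (hA : (Matrix.fromBlocks Auu Abuᵀ Abu Abb).PosDef)
    (hB : Bpu.rank = k)
    (P : Matrix (Fin n) (Fin n) ℝ)
    (hP : P = 1 - Auu⁻¹ * Bpuᵀ * (Bpu * Auu⁻¹ * Bpuᵀ)⁻¹ * Bpu) :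
    (Matrix.fromBlocks Auu (Pᵀ * Abuᵀ) (Abu * P) Abb).PosDef := by
  -- Auu is positive definite
  have hAbuH : (Abuᵀ)ᴴ = Abu := by
    rw [real_conjTranspose_eq_transpose, transpose_transpose]
  have hAuu : Auu.PosDef := by
    rw [posDef_iff_dotProduct_mulVec]
    constructor
    · ext i j
      simpa using congrFun (congrFun hA.1 (Sum.inl i)) (Sum.inl j)
    · intro x hx
      have := (posDef_iff_dotProduct_mulVec.mp hA).2 (x := Sum.elim x 0) (fun hc => hx (funext fun i => congrFun hc (Sum.inl i)))
      simpa [fromBlocks_mulVec, Function.star_sumElim, sumElim_dotProduct_sumElim] using this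
  haveI : Invertible Auu := Matrix.invertibleOfIsUnitDet Auu
    (isUnit_iff_ne_zero.2 hAuu.det_pos.ne')
  have hAinv : Auu⁻¹.PosDef := hAuu.inv
  have hAs : Auu⁻¹ᵀ = Auu⁻¹ := by
    rw [← real_conjTranspose_eq_transpose]; exact hAinv.1
  -- Bpuᵀ has trivial kernel
  have hinj : ∀ x : Fin k → ℝ, x ≠ 0 → Bpuᵀ *ᵥ x ≠ 0 := by
    intro x hx
    have hrank : Bpuᵀ.rank = k := by rw [Bpu.rank_transpose, hB]
    have h1 := LinearMap.finrank_range_add_finrank_ker (Bpuᵀ.mulVecLin)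
    rw [show (Module.finrank ℝ (LinearMap.range Bpuᵀ.mulVecLin)) = k from hrank] at h1
    simp [Module.finrank_pi] at h1
    have hinj' := LinearMap.ker_eq_bot.mp h1
    intro hc
    refine hx (hinj' ?_)
    rw [map_zero]
    show x ᵥ* Bpu = 0
    rwa [← mulVec_transpose]
  -- M := Bpu * Auu⁻¹ * Bpuᵀ is positive definite
  have hM : (Bpu * Auu⁻¹ * Bpuᵀ).PosDef := by
    rw [posDef_iff_dotProduct_mulVec]
    constructor
    · have := isHermitian_mul_mul_conjTranspose Bpu hAinv.1
      simpa [real_conjTranspose_eq_transpose] using this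
    · intro x hx
      have key := hAinv.dotProduct_mulVec_pos (hinj x hx)
      rw [← mulVec_mulVec, ← mulVec_mulVec]
      rwa [star_trivial, dotProduct_mulVec x Bpu, ← mulVec_transpose, ← star_trivial (Bpuᵀ *ᵥ x)]
  have hMdet : IsUnit (Bpu * Auu⁻¹ * Bpuᵀ).det := isUnit_iff_ne_zero.2 hM.det_pos.ne'
  have hMinv : (Bpu * Auu⁻¹ * Bpuᵀ)⁻¹.PosDef := hM.inv
  have hMs : ((Bpu * Auu⁻¹ * Bpuᵀ)⁻¹)ᵀ = (Bpu * Auu⁻¹ * Bpuᵀ)⁻¹ := by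
    rw [← real_conjTranspose_eq_transpose]; exact hMinv.1
  -- transpose of P
  have hPt : Pᵀ = 1 - Bpuᵀ * (Bpu * Auu⁻¹ * Bpuᵀ)⁻¹ * Bpu * Auu⁻¹ := by
    rw [hP, transpose_sub, transpose_one]
    simp only [transpose_mul, transpose_transpose, hMs, hAs, ← Matrix.mul_assoc]
  -- Auu⁻¹ * Pᵀ
  have hQ : Auu⁻¹ * Pᵀ =
      Auu⁻¹ - Auu⁻¹ * Bpuᵀ * (Bpu * Auu⁻¹ * Bpuᵀ)⁻¹ * (Bpu * Auu⁻¹) := by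
    rw [hPt]
    simp only [Matrix.mul_sub, Matrix.mul_one, Matrix.mul_assoc]
  have hBQ : Bpu * (Auu⁻¹ * Pᵀ) = 0 := by
    rw [hQ, Matrix.mul_sub]
    simp only [← Matrix.mul_assoc]
    rw [Matrix.mul_nonsing_inv _ hMdet, Matrix.one_mul, sub_self]
  have hPQ : P * (Auu⁻¹ * Pᵀ) = Auu⁻¹ * Pᵀ := by
    nth_rewrite 1 [hP]
    rw [Matrix.sub_mul, Matrix.one_mul,
      Matrix.mul_assoc (Auu⁻¹ * Bpuᵀ * (Bpu * Auu⁻¹ * Bpuᵀ)⁻¹) Bpu (Auu⁻¹ * Pᵀ), hBQ,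
      Matrix.mul_zero, sub_zero]
  -- Schur complement identity
  have hSchur : Abb - (Pᵀ * Abuᵀ)ᴴ * Auu⁻¹ * (Pᵀ * Abuᵀ) =
      (Abb - Abu * Auu⁻¹ * Abuᵀ) +
        (Abu * Auu⁻¹ * Bpuᵀ) * (Bpu * Auu⁻¹ * Bpuᵀ)⁻¹ * (Abu * Auu⁻¹ * Bpuᵀ)ᴴ := by
    rw [real_conjTranspose_eq_transpose, real_conjTranspose_eq_transpose]
    simp only [transpose_mul, transpose_transpose, hAs]
    have : Abu * P * Auu⁻¹ * (Pᵀ * Abuᵀ) = Abu * (P * (Auu⁻¹ * Pᵀ)) * Abuᵀ := by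
      simp only [Matrix.mul_assoc]
    rw [this, hPQ, hQ]
    simp only [Matrix.mul_sub, Matrix.sub_mul, Matrix.mul_assoc]
    abel
  -- Schur complement of the original matrix
  have hSchurA : (Abb - Abu * Auu⁻¹ * Abuᵀ).PosDef := by
    have := (posDef_fromBlocks₁₁_real Abuᵀ Abb hAuu).1 (by rwa [hAbuH])
    rwa [hAbuH] at this
  -- assemble
  have hBlockH : (Pᵀ * Abuᵀ)ᴴ = Abu * P := by
    rw [real_conjTranspose_eq_transpose, transpose_mul, transpose_transpose, transpose_transpose]
  rw [← hBlockH]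
  rw [posDef_fromBlocks₁₁_real _ _ hAuu, hSchur]
  exact hSchurA.add_posSemidef (hMinv.posSemidef.mul_mul_conjTranspose_same _)
end

section
/- With ℛ = blockdiag(𝒫, I) and A_P as above, for every w = (w₁, w₂): ⟨A_P ℛw, ℛw⟩ = ⟨A_P w, w⟩ − ⟨S_pp⁻¹ B_pu w₁, B_pu w₁⟩ ≤ ⟨A_P w, w⟩, where S_pp = B_pu A_uu⁻¹ B_puᵀ. -/
open Matrix

theorem stmt_17 {n m k : ℕ}
    (Auu : Matrix (Fin n) (Fin n) ℝ) (Abu : Matrix (Fin m) (Fin n) ℝ)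
    (Abb : Matrix (Fin m) (Fin m) ℝ) (Bpu : Matrix (Fin k) (Fin n) ℝ)
    (hA : (Matrix.fromBlocks Auu Abuᵀ Abu Abb).PosDef)
    (hB : Bpu.rank = k)
    (Spp : Matrix (Fin k) (Fin k) ℝ) (hSpp : Spp = Bpu * Auu⁻¹ * Bpuᵀ)
    (P : Matrix (Fin n) (Fin n) ℝ)
    (hP : P = 1 - Auu⁻¹ * Bpuᵀ * Spp⁻¹ * Bpu)
    (AP : Matrix (Fin n ⊕ Fin m) (Fin n ⊕ Fin m) ℝ)
    (hAP : AP = Matrix.fromBlocks Auu (Pᵀ * Abuᵀ) (Abu * P) Abb)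
    (R : Matrix (Fin n ⊕ Fin m) (Fin n ⊕ Fin m) ℝ)
    (hR : R = Matrix.fromBlocks P 0 0 1)
    (w₁ : Fin n → ℝ) (w₂ : Fin m → ℝ) :
    (R.mulVec (Sum.elim w₁ w₂)) ⬝ᵥ AP.mulVec (R.mulVec (Sum.elim w₁ w₂)) =
        Sum.elim w₁ w₂ ⬝ᵥ AP.mulVec (Sum.elim w₁ w₂)
          - (Spp⁻¹.mulVec (Bpu.mulVec w₁)) ⬝ᵥ (Bpu.mulVec w₁) ∧
      (R.mulVec (Sum.elim w₁ w₂)) ⬝ᵥ AP.mulVec (R.mulVec (Sum.elim w₁ w₂)) ≤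
        Sum.elim w₁ w₂ ⬝ᵥ AP.mulVec (Sum.elim w₁ w₂) := by
  -- Auu is positive definite
  have hAuu : Auu.PosDef := by
    refine Matrix.PosDef.of_dotProduct_mulVec_pos ?_ ?_
    · have h : (Matrix.fromBlocks Auu Abuᵀ Abu Abb)ᴴ = Matrix.fromBlocks Auu Abuᵀ Abu Abb :=
        hA.1
      rw [fromBlocks_conjTranspose] at h
      have h2 := congrArg Matrix.toBlocks₁₁ h
      simp only [Matrix.toBlocks_fromBlocks₁₁] at h2
      exact h2
    · intro x hx
      have hxne : (Sum.elim x (0 : Fin m → ℝ)) ≠ 0 := by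
        intro h
        exact hx (funext fun i => congrFun h (Sum.inl i))
      have := hA.dotProduct_mulVec_pos hxne
      simpa [fromBlocks_mulVec, sumElim_dotProduct_sumElim] using this
  have hAuuInv : Auu⁻¹.PosDef := hAuu.inv
  -- Bpuᵀ has trivial kernel
  have hker : ∀ v : Fin k → ℝ, Bpuᵀ *ᵥ v = 0 → v = 0 := by
    rw [← Matrix.ker_mulVecLin_eq_bot_iff]
    have h1 : Bpuᵀ.rank = k := by rw [Matrix.rank_transpose, hB]
    have h2 := LinearMap.finrank_range_add_finrank_ker (Bpuᵀ.mulVecLin)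
    rw [Module.finrank_fin_fun] at h2
    rw [Matrix.rank] at h1
    rw [h1] at h2
    have h3 : Module.finrank ℝ (LinearMap.ker Bpuᵀ.mulVecLin) = 0 := by omega
    exact Submodule.finrank_eq_zero.mp h3
  -- Spp is positive definite
  have hSppPD : Spp.PosDef := by
    refine Matrix.PosDef.of_dotProduct_mulVec_pos ?_ ?_
    · rw [hSpp]
      have : (Bpu * Auu⁻¹ * Bpuᵀ)ᴴ = Bpu * Auu⁻¹ * Bpuᵀ := by
        simp only [conjTranspose_eq_transpose_of_trivial, Matrix.transpose_mul,
          Matrix.transpose_transpose]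
        have hsym : Auu⁻¹ᵀ = Auu⁻¹ := by
          have h' : Auu⁻¹ᴴ = Auu⁻¹ := hAuuInv.1
          rwa [conjTranspose_eq_transpose_of_trivial] at h'
        rw [hsym, Matrix.mul_assoc]
      exact this
    · intro x hx
      have hy : Bpuᵀ *ᵥ x ≠ 0 := fun h => hx (hker x h)
      have := hAuuInv.dotProduct_mulVec_pos hy
      rw [star_trivial] at this ⊢
      rw [hSpp]
      have heq : x ⬝ᵥ (Bpu * Auu⁻¹ * Bpuᵀ) *ᵥ x = (Bpuᵀ *ᵥ x) ⬝ᵥ Auu⁻¹ *ᵥ (Bpuᵀ *ᵥ x) := by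
        rw [← Matrix.mulVec_mulVec, ← Matrix.mulVec_mulVec, Matrix.dotProduct_mulVec,
          ← Matrix.mulVec_transpose]
      rw [heq]
      exact this
  have hdetS : IsUnit Spp.det := hSppPD.det_pos.ne'.isUnit
  have hdetA : IsUnit Auu.det := hAuu.det_pos.ne'.isUnit
  have hSS : Spp * Spp⁻¹ = 1 := Matrix.mul_nonsing_inv _ hdetS
  have hAA : Auu * Auu⁻¹ = 1 := Matrix.mul_nonsing_inv _ hdetA
  have hAA' : Auu⁻¹ * Auu = 1 := Matrix.nonsing_inv_mul _ hdetA
  -- key cancellation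
  have hkey : ∀ {p : ℕ} (X : Matrix (Fin k) (Fin p) ℝ),
      Bpu * (Auu⁻¹ * (Bpuᵀ * (Spp⁻¹ * X))) = X := by
    intro p X
    calc Bpu * (Auu⁻¹ * (Bpuᵀ * (Spp⁻¹ * X)))
        = (Bpu * Auu⁻¹ * Bpuᵀ) * (Spp⁻¹ * X) := by simp [Matrix.mul_assoc]
      _ = Spp * Spp⁻¹ * X := by rw [← hSpp, Matrix.mul_assoc, ← Matrix.mul_assoc]
      _ = X := by rw [hSS, Matrix.one_mul]
  -- symmetry of Spp⁻¹
  have hSinvSym : Spp⁻¹ᵀ = Spp⁻¹ := by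
    have hs : Sppᵀ = Spp := by
      have h' : Sppᴴ = Spp := hSppPD.1
      rwa [conjTranspose_eq_transpose_of_trivial] at h'
    rw [Matrix.transpose_nonsing_inv, hs]
  set T : Matrix (Fin n) (Fin n) ℝ := Bpuᵀ * Spp⁻¹ * Bpu with hT
  -- P is idempotent
  have hMM : (Auu⁻¹ * Bpuᵀ * Spp⁻¹ * Bpu) * (Auu⁻¹ * Bpuᵀ * Spp⁻¹ * Bpu)
      = Auu⁻¹ * Bpuᵀ * Spp⁻¹ * Bpu := by
    calc (Auu⁻¹ * Bpuᵀ * Spp⁻¹ * Bpu) * (Auu⁻¹ * Bpuᵀ * Spp⁻¹ * Bpu)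
        = Auu⁻¹ * (Bpuᵀ * (Spp⁻¹ * (Bpu * (Auu⁻¹ * (Bpuᵀ * (Spp⁻¹ * Bpu)))))) := by
          simp [Matrix.mul_assoc]
      _ = Auu⁻¹ * (Bpuᵀ * (Spp⁻¹ * Bpu)) := by rw [hkey Bpu]
      _ = Auu⁻¹ * Bpuᵀ * Spp⁻¹ * Bpu := by simp [Matrix.mul_assoc]
  have hPP : P * P = P := by
    rw [hP]
    simp only [sub_mul, mul_sub, Matrix.one_mul, Matrix.mul_one, hMM]
    abel
  -- transpose of P
  have hAuuSym : Auuᵀ = Auu := by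
    have h' : Auuᴴ = Auu := hAuu.1
    rwa [conjTranspose_eq_transpose_of_trivial] at h'
  have hAuuInvSym : Auu⁻¹ᵀ = Auu⁻¹ := by
    rw [Matrix.transpose_nonsing_inv, hAuuSym]
  have hPt : Pᵀ = 1 - T * Auu⁻¹ := by
    rw [hP, Matrix.transpose_sub, Matrix.transpose_one]
    congr 1
    rw [hT]
    simp only [Matrix.transpose_mul, Matrix.transpose_transpose, hSinvSym, hAuuInvSym]
    simp [Matrix.mul_assoc]
  -- Auu * P = Auu - T
  have hAuuP : Auu * P = Auu - T := by
    rw [hP, mul_sub, mul_one]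
    congr 1
    calc Auu * (Auu⁻¹ * Bpuᵀ * Spp⁻¹ * Bpu) = (Auu * Auu⁻¹) * (Bpuᵀ * Spp⁻¹ * Bpu) := by
          simp [Matrix.mul_assoc]
      _ = T := by rw [hAA, one_mul, hT, Matrix.mul_assoc]
  -- T * Auu⁻¹ * T = T
  have hTAT : T * Auu⁻¹ * T = T := by
    calc T * Auu⁻¹ * T = Bpuᵀ * (Spp⁻¹ * (Bpu * (Auu⁻¹ * (Bpuᵀ * (Spp⁻¹ * Bpu))))) := by
          rw [hT]; simp [Matrix.mul_assoc]
      _ = Bpuᵀ * (Spp⁻¹ * Bpu) := by rw [hkey Bpu]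
      _ = T := by rw [hT, Matrix.mul_assoc]
  -- Pᵀ * Auu * P = Auu - T
  have hPAP : Pᵀ * (Auu * P) = Auu - T := by
    rw [hAuuP, hPt, sub_mul, one_mul, mul_sub, hTAT]
    have : T * Auu⁻¹ * Auu = T := by rw [Matrix.mul_assoc, hAA', mul_one]
    rw [this]
    abel
  -- basic dot product shifting lemma
  have dshift : ∀ {p q : ℕ} (M : Matrix (Fin p) (Fin q) ℝ) (x : Fin q → ℝ) (y : Fin p → ℝ),
      (M *ᵥ x) ⬝ᵥ y = x ⬝ᵥ (Mᵀ *ᵥ y) := by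
    intro p q M x y
    rw [Matrix.dotProduct_mulVec, ← Matrix.mulVec_transpose, Matrix.transpose_transpose]
  -- Rw = (P w₁, w₂)
  have hv : R *ᵥ (Sum.elim w₁ w₂) = Sum.elim (P *ᵥ w₁) w₂ := by
    rw [hR, fromBlocks_mulVec]
    simp
  -- quadratic form expansion
  have hq : ∀ a : Fin n → ℝ, Sum.elim a w₂ ⬝ᵥ AP *ᵥ Sum.elim a w₂ =
      a ⬝ᵥ (Auu *ᵥ a) + a ⬝ᵥ ((Pᵀ * Abuᵀ) *ᵥ w₂) + w₂ ⬝ᵥ ((Abu * P) *ᵥ a)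
        + w₂ ⬝ᵥ (Abb *ᵥ w₂) := by
    intro a
    rw [hAP, fromBlocks_mulVec, sumElim_dotProduct_sumElim]
    simp only [Sum.elim_comp_inl, Sum.elim_comp_inr, dotProduct_add]
    ring
  -- the subtracted term
  have hsub : (Spp⁻¹.mulVec (Bpu.mulVec w₁)) ⬝ᵥ (Bpu.mulVec w₁) = w₁ ⬝ᵥ (T *ᵥ w₁) := by
    rw [Matrix.mulVec_mulVec, dshift]
    rw [Matrix.transpose_mul, hSinvSym, hT]
    rw [← Matrix.mulVec_mulVec, ← Matrix.mulVec_mulVec, ← Matrix.mulVec_mulVec]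
  -- term A
  have htermA : (P *ᵥ w₁) ⬝ᵥ (Auu *ᵥ (P *ᵥ w₁)) = w₁ ⬝ᵥ (Auu *ᵥ w₁) - w₁ ⬝ᵥ (T *ᵥ w₁) := by
    rw [Matrix.mulVec_mulVec, dshift, Matrix.mulVec_mulVec, hPAP, Matrix.sub_mulVec,
      dotProduct_sub]
  -- term B
  have hPtPt : Pᵀ * Pᵀ = Pᵀ := by rw [← Matrix.transpose_mul, hPP]
  have htermB : (P *ᵥ w₁) ⬝ᵥ ((Pᵀ * Abuᵀ) *ᵥ w₂) = w₁ ⬝ᵥ ((Pᵀ * Abuᵀ) *ᵥ w₂) := by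
    rw [dshift, Matrix.mulVec_mulVec, ← Matrix.mul_assoc, hPtPt]
  -- term C
  have htermC : w₂ ⬝ᵥ ((Abu * P) *ᵥ (P *ᵥ w₁)) = w₂ ⬝ᵥ ((Abu * P) *ᵥ w₁) := by
    rw [Matrix.mulVec_mulVec, Matrix.mul_assoc, hPP]
  have heq : (R.mulVec (Sum.elim w₁ w₂)) ⬝ᵥ AP.mulVec (R.mulVec (Sum.elim w₁ w₂)) =
      Sum.elim w₁ w₂ ⬝ᵥ AP.mulVec (Sum.elim w₁ w₂)
        - (Spp⁻¹.mulVec (Bpu.mulVec w₁)) ⬝ᵥ (Bpu.mulVec w₁) := by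
    rw [hv, hq (P *ᵥ w₁), hq w₁, hsub, htermA, htermB, htermC]
    ring
  refine ⟨heq, ?_⟩
  rw [heq]
  have hnonneg : 0 ≤ (Spp⁻¹.mulVec (Bpu.mulVec w₁)) ⬝ᵥ (Bpu.mulVec w₁) := by
    rw [dotProduct_comm]
    have := hSppPD.inv.posSemidef.dotProduct_mulVec_nonneg (Bpu *ᵥ w₁)
    rwa [star_trivial] at this
  linarith
end
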